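/- For the sequence μ constructed in the paper one has liminf_{k→∞} μ_{4k}/μ_k ≥ 2^{1/4} > 1, and for every integer ℓ ≥ 2 one has liminf_{j→∞} μ_{ℓ j}/μ_j ≤ ℓ^β with β := 1/2 + (1/2)·log 2/log 3 < 1; in particular the growth index satisfies γ(M) ≤ β < 1. -/

import Mathlib

open Filter

/-- A weight function: non-decreasing on `[0,∞)`, non-negative, tending to `+∞`. -/
def IsWeight (ω : ℝ → ℝ) : Prop :=
  (∀ t, 0 ≤ ω t) ∧ MonotoneOn ω (Set.Ici (0 : ℝ)) ∧ Tendsto ω atTop atTop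

/-- Property `P(ω,γ)`: there is `K > 1` with `limsup_{t→∞} ω(K^γ t)/ω(t) < K`. -/
def PropP (ω : ℝ → ℝ) (γ : ℝ) : Prop :=
  ∃ K : ℝ, 1 < K ∧ limsup (fun t => ω (K ^ γ * t) / ω t) atTop < K

/-- The growth index `γ(ω) = sup {γ > 0 : P(ω,γ)} ∈ [0,∞]` (`0` if the set is empty). -/
noncomputable def gammaIdx (ω : ℝ → ℝ) : ENNReal :=
  ⨆ γ ∈ {γ : ℝ | 0 < γ ∧ PropP ω γ}, ENNReal.ofReal γ

/-- Growth index of a quotient sequence: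
`γ(M) = sup {γ > 0 : ∃ ℓ ≥ 2, liminf_j μ_{ℓj}/μ_j > ℓ^γ}`. -/
noncomputable def seqGammaIdx (μ : ℕ → ℝ) : ENNReal :=
  ⨆ γ ∈ {γ : ℝ | 0 < γ ∧ ∃ ℓ : ℕ, 2 ≤ ℓ ∧
      (ℓ : ℝ) ^ γ < liminf (fun j : ℕ => μ (ℓ * j) / μ j) atTop},
    ENNReal.ofReal γ


namespace MuAux

lemma dyadic {x k : ℕ} (n : ℕ) (hk : x < k) (h2 : k ≤ 2 ^ n * x) :
    ∃ i, i < n ∧ 2 ^ i * x < k ∧ k ≤ 2 ^ (i + 1) * x := by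
  induction n with
  | zero => simp at h2; omega
  | succ n ih =>
    by_cases h : k ≤ 2 ^ n * x
    · obtain ⟨i, hi, h⟩ := ih h
      exact ⟨i, Nat.lt_succ_of_lt hi, h⟩
    · exact ⟨n, Nat.lt_succ_self n, by omega, h2⟩

section

variable {A : ℝ} {a b d : ℕ → ℕ} {μ : ℕ → ℝ}

lemma a_pos (ha1 : a 1 = 1) (hb : ∀ j ≥ 1, b j = 2 ^ (d j) * a j)
    (ha : ∀ j ≥ 1, a (j + 1) = 2 ^ j * b j) : ∀ j, 1 ≤ j → 0 < a j := by
  intro j hj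
  induction j, hj using Nat.le_induction with
  | base => omega
  | succ j hj ih => rw [ha j hj, hb j hj]; positivity

lemma a_step (ha1 : a 1 = 1) (hb : ∀ j ≥ 1, b j = 2 ^ (d j) * a j)
    (ha : ∀ j ≥ 1, a (j + 1) = 2 ^ j * b j) : ∀ j, 1 ≤ j → 2 * a j ≤ a (j + 1) := by
  intro j hj
  rw [ha j hj, hb j hj]
  calc 2 * a j ≤ 2 ^ j * a j := by
        apply Nat.mul_le_mul_right
        calc 2 = 2 ^ 1 := (pow_one 2).symm
        _ ≤ 2 ^ j := Nat.pow_le_pow_right (by norm_num) hj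
  _ ≤ 2 ^ j * (2 ^ (d j) * a j) := by
        apply Nat.mul_le_mul_left
        exact Nat.le_mul_of_pos_left _ (by positivity)

lemma a_ge_idx (ha1 : a 1 = 1) (hb : ∀ j ≥ 1, b j = 2 ^ (d j) * a j)
    (ha : ∀ j ≥ 1, a (j + 1) = 2 ^ j * b j) : ∀ j, 1 ≤ j → j ≤ a j := by
  intro j hj
  induction j, hj using Nat.le_induction with
  | base => omega
  | succ j hj ih =>
    have h1 := a_step ha1 hb ha j hj
    have h2 := a_pos ha1 hb ha j hj
    omega

lemma d_ge (hd : StrictMonoOn d (Set.Ici 1)) (hd1 : 1 ≤ d 1) : ∀ j, 1 ≤ j → j ≤ d j := by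
  intro j hj
  induction j, hj using Nat.le_induction with
  | base => exact hd1
  | succ j hj ih =>
    have : d j < d (j + 1) := hd (Set.mem_Ici.mpr hj) (Set.mem_Ici.mpr (by omega)) (by omega)
    omega

lemma cover (ha1 : a 1 = 1) (hb : ∀ j ≥ 1, b j = 2 ^ (d j) * a j)
    (ha : ∀ j ≥ 1, a (j + 1) = 2 ^ j * b j) :
    ∀ k, 2 ≤ k → ∃ j, 1 ≤ j ∧ a j < k ∧ k ≤ a (j + 1) := by
  intro k hk
  induction k, hk using Nat.le_induction with
  | base =>
    refine ⟨1, le_refl _, by omega, ?_⟩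
    have := a_step ha1 hb ha 1 (le_refl _)
    omega
  | succ k hk ih =>
    obtain ⟨j, hj, h1, h2⟩ := ih
    by_cases h : k + 1 ≤ a (j + 1)
    · exact ⟨j, hj, by omega, h⟩
    · refine ⟨j + 1, by omega, by omega, ?_⟩
      have := a_step ha1 hb ha (j + 1) (by omega)
      have := a_pos ha1 hb ha (j + 1) (by omega)
      omega

lemma b_pos (ha1 : a 1 = 1) (hb : ∀ j ≥ 1, b j = 2 ^ (d j) * a j)
    (ha : ∀ j ≥ 1, a (j + 1) = 2 ^ j * b j) : ∀ j, 1 ≤ j → 0 < b j := by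
  intro j hj
  rw [hb j hj]
  have := a_pos ha1 hb ha j hj
  positivity




open Filter




lemma mu_b (hA : 2 < A) (hd : StrictMonoOn d (Set.Ici 1)) (hd1 : 1 ≤ d 1)
    (ha1 : a 1 = 1) (hb : ∀ j ≥ 1, b j = 2 ^ (d j) * a j)
    (ha : ∀ j ≥ 1, a (j + 1) = 2 ^ j * b j)
    (hblock1 : ∀ j ≥ 1, ∀ i < d j, ∀ k, 2 ^ i * a j < k → k ≤ 2 ^ (i + 1) * a j →
      μ k = A ^ (i + 1) * μ (a j)) :
    ∀ j, 1 ≤ j → μ (b j) = A ^ (d j) * μ (a j) := by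
  intro j hj
  have hdj : 1 ≤ d j := le_trans hj (d_ge hd hd1 j hj)
  have hap := a_pos ha1 hb ha j hj
  have h1 : 2 ^ (d j - 1) * a j < b j := by
    rw [hb j hj]
    exact (Nat.mul_lt_mul_right hap).mpr (Nat.pow_lt_pow_right (by norm_num) (by omega))
  have h2 : b j ≤ 2 ^ (d j - 1 + 1) * a j := by
    rw [hb j hj, Nat.sub_add_cancel hdj]
  have := hblock1 j hj (d j - 1) (by omega) (b j) h1 h2
  rwa [Nat.sub_add_cancel hdj] at this

lemma mu_in2 (ha1 : a 1 = 1) (hb : ∀ j ≥ 1, b j = 2 ^ (d j) * a j)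
    (ha : ∀ j ≥ 1, a (j + 1) = 2 ^ j * b j)
    (hblock2 : ∀ j ≥ 1, ∀ i < j, ∀ k, 2 ^ i * b j < k → k ≤ 2 ^ (i + 1) * b j →
      μ k = (2 : ℝ) ^ ((1 : ℝ) / (2 * 2 ^ i * (b j : ℝ))) * μ (k - 1)) :
    ∀ j, 1 ≤ j → ∀ i, i < j → ∀ k, 2 ^ i * b j ≤ k → k ≤ 2 ^ (i + 1) * b j →
      μ k = (2 : ℝ) ^ (((k : ℝ) - 2 ^ i * (b j : ℝ)) / (2 * 2 ^ i * (b j : ℝ))) *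
        μ (2 ^ i * b j) := by
  intro j hj i hij k hk1 hk2
  induction k, hk1 using Nat.le_induction with
  | base => simp
  | succ k hk ih =>
    have hbp := b_pos ha1 hb ha j hj
    have hBpos : (0:ℝ) < 2 * 2 ^ i * (b j : ℝ) := by positivity
    have hstep := hblock2 j hj i hij (k + 1) (by omega) hk2
    have hk' : k ≤ 2 ^ (i + 1) * b j := by omega
    rw [Nat.add_sub_cancel] at hstep
    rw [hstep, ih hk', ← mul_assoc, ← Real.rpow_add (by norm_num : (0:ℝ) < 2)]
    congr 1
    have hcast : ((k : ℝ) + 1) = ((k + 1 : ℕ) : ℝ) := by push_cast; ring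
    rw [← add_div]
    congr 1
    push_cast
    ring

lemma mu_pow2b (ha1 : a 1 = 1) (hb : ∀ j ≥ 1, b j = 2 ^ (d j) * a j)
    (ha : ∀ j ≥ 1, a (j + 1) = 2 ^ j * b j)
    (hblock2 : ∀ j ≥ 1, ∀ i < j, ∀ k, 2 ^ i * b j < k → k ≤ 2 ^ (i + 1) * b j →
      μ k = (2 : ℝ) ^ ((1 : ℝ) / (2 * 2 ^ i * (b j : ℝ))) * μ (k - 1)) :
    ∀ j, 1 ≤ j → ∀ i, i ≤ j → μ (2 ^ i * b j) = (2 : ℝ) ^ ((i : ℝ) / 2) * μ (b j) := by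
  intro j hj i hij
  induction i with
  | zero => simp
  | succ i ih =>
    have hij' : i < j := by omega
    have hbp := b_pos ha1 hb ha j hj
    have hv := mu_in2 ha1 hb ha hblock2 j hj i hij' (2 ^ (i + 1) * b j)
      (by
        apply Nat.mul_le_mul_right
        exact Nat.pow_le_pow_right (by norm_num) (by omega))
      (le_refl _)
    have hexp : (((2 ^ (i + 1) * b j : ℕ) : ℝ) - 2 ^ i * (b j : ℝ)) /
        (2 * 2 ^ i * (b j : ℝ)) = 1 / 2 := by
      have hbr : (0:ℝ) < (b j : ℝ) := by exact_mod_cast hbp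
      field_simp
      push_cast
      ring
    rw [hv, hexp, ih (by omega), ← mul_assoc, ← Real.rpow_add (by norm_num : (0:ℝ) < 2)]
    congr 1
    push_cast
    ring

lemma mu_a_pos (hA : 2 < A) (hd : StrictMonoOn d (Set.Ici 1)) (hd1 : 1 ≤ d 1)
    (ha1 : a 1 = 1) (hb : ∀ j ≥ 1, b j = 2 ^ (d j) * a j)
    (ha : ∀ j ≥ 1, a (j + 1) = 2 ^ j * b j) (hμa1 : μ (a 1) = 2)
    (hblock1 : ∀ j ≥ 1, ∀ i < d j, ∀ k, 2 ^ i * a j < k → k ≤ 2 ^ (i + 1) * a j →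
      μ k = A ^ (i + 1) * μ (a j))
    (hblock2 : ∀ j ≥ 1, ∀ i < j, ∀ k, 2 ^ i * b j < k → k ≤ 2 ^ (i + 1) * b j →
      μ k = (2 : ℝ) ^ ((1 : ℝ) / (2 * 2 ^ i * (b j : ℝ))) * μ (k - 1)) :
    ∀ j, 1 ≤ j → 0 < μ (a j) := by
  intro j hj
  induction j, hj using Nat.le_induction with
  | base => rw [hμa1]; norm_num
  | succ j hj ih =>
    have h1 : μ (a (j + 1)) = (2:ℝ) ^ ((j : ℝ) / 2) * μ (b j) := by
      rw [ha j hj]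
      exact mu_pow2b ha1 hb ha hblock2 j hj j (le_refl _)
    rw [h1, mu_b hA hd hd1 ha1 hb ha hblock1 j hj]
    have hApos : (0:ℝ) < A := by linarith
    positivity




lemma classify (ha1 : a 1 = 1) (hb : ∀ j ≥ 1, b j = 2 ^ (d j) * a j)
    (ha : ∀ j ≥ 1, a (j + 1) = 2 ^ j * b j) :
    ∀ k, 2 ≤ k → ∃ j, 1 ≤ j ∧
      ((∃ i, i < d j ∧ 2 ^ i * a j < k ∧ k ≤ 2 ^ (i + 1) * a j) ∨
       (∃ i, i < j ∧ 2 ^ i * b j < k ∧ k ≤ 2 ^ (i + 1) * b j)) := by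
  intro k hk
  obtain ⟨j, hj, h1, h2⟩ := cover ha1 hb ha k hk
  refine ⟨j, hj, ?_⟩
  by_cases h : k ≤ b j
  · left
    have := dyadic (d j) h1 (by rwa [← hb j hj])
    exact this
  · right
    push_neg at h
    have h2' : k ≤ 2 ^ j * b j := by rwa [← ha j hj]
    exact dyadic j h h2'

/-- Combined block-2 value in terms of `μ (b j)`. -/
lemma mu_val2 (ha1 : a 1 = 1) (hb : ∀ j ≥ 1, b j = 2 ^ (d j) * a j)
    (ha : ∀ j ≥ 1, a (j + 1) = 2 ^ j * b j)
    (hblock2 : ∀ j ≥ 1, ∀ i < j, ∀ k, 2 ^ i * b j < k → k ≤ 2 ^ (i + 1) * b j →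
      μ k = (2 : ℝ) ^ ((1 : ℝ) / (2 * 2 ^ i * (b j : ℝ))) * μ (k - 1)) :
    ∀ j, 1 ≤ j → ∀ i, i < j → ∀ k, 2 ^ i * b j ≤ k → k ≤ 2 ^ (i + 1) * b j →
      μ k = (2 : ℝ) ^ (((k : ℝ) - 2 ^ i * (b j : ℝ)) / (2 * 2 ^ i * (b j : ℝ)) + (i : ℝ) / 2) *
        μ (b j) := by
  intro j hj i hij k hk1 hk2
  rw [mu_in2 ha1 hb ha hblock2 j hj i hij k hk1 hk2,
    mu_pow2b ha1 hb ha hblock2 j hj i (by omega), ← mul_assoc,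
    ← Real.rpow_add (by norm_num : (0:ℝ) < 2)]

lemma mu_pos (hA : 2 < A) (hd : StrictMonoOn d (Set.Ici 1)) (hd1 : 1 ≤ d 1)
    (ha1 : a 1 = 1) (hb : ∀ j ≥ 1, b j = 2 ^ (d j) * a j)
    (ha : ∀ j ≥ 1, a (j + 1) = 2 ^ j * b j) (hμa1 : μ (a 1) = 2)
    (hblock1 : ∀ j ≥ 1, ∀ i < d j, ∀ k, 2 ^ i * a j < k → k ≤ 2 ^ (i + 1) * a j →
      μ k = A ^ (i + 1) * μ (a j))
    (hblock2 : ∀ j ≥ 1, ∀ i < j, ∀ k, 2 ^ i * b j < k → k ≤ 2 ^ (i + 1) * b j →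
      μ k = (2 : ℝ) ^ ((1 : ℝ) / (2 * 2 ^ i * (b j : ℝ))) * μ (k - 1)) :
    ∀ k, 1 ≤ k → 0 < μ k := by
  have hApos : (0:ℝ) < A := by linarith
  intro k hk
  rcases Nat.lt_or_ge k 2 with h2 | h2
  · have hk1 : k = 1 := by omega
    subst hk1
    have h := mu_a_pos hA hd hd1 ha1 hb ha hμa1 hblock1 hblock2 1 (le_refl _)
    rwa [ha1] at h
  obtain ⟨j, hj, hcase⟩ := classify ha1 hb ha k h2
  have hap := mu_a_pos hA hd hd1 ha1 hb ha hμa1 hblock1 hblock2 j hj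
  rcases hcase with ⟨i, hi, hlt, hle⟩ | ⟨i, hi, hlt, hle⟩
  · rw [hblock1 j hj i hi k hlt hle]
    positivity
  · rw [mu_val2 ha1 hb ha hblock2 j hj i hi k (le_of_lt hlt) hle,
      mu_b hA hd hd1 ha1 hb ha hblock1 j hj]
    positivity

lemma mu_step (hA : 2 < A) (hd : StrictMonoOn d (Set.Ici 1)) (hd1 : 1 ≤ d 1)
    (ha1 : a 1 = 1) (hb : ∀ j ≥ 1, b j = 2 ^ (d j) * a j)
    (ha : ∀ j ≥ 1, a (j + 1) = 2 ^ j * b j) (hμa1 : μ (a 1) = 2)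
    (hblock1 : ∀ j ≥ 1, ∀ i < d j, ∀ k, 2 ^ i * a j < k → k ≤ 2 ^ (i + 1) * a j →
      μ k = A ^ (i + 1) * μ (a j))
    (hblock2 : ∀ j ≥ 1, ∀ i < j, ∀ k, 2 ^ i * b j < k → k ≤ 2 ^ (i + 1) * b j →
      μ k = (2 : ℝ) ^ ((1 : ℝ) / (2 * 2 ^ i * (b j : ℝ))) * μ (k - 1)) :
    ∀ k, 1 ≤ k → μ k ≤ μ (k + 1) := by
  have hApos : (0:ℝ) < A := by linarith
  have hA1 : (1:ℝ) ≤ A := by linarith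
  intro k hk
  obtain ⟨j, hj, hcase⟩ := classify ha1 hb ha (k + 1) (by omega)
  have hap := mu_a_pos hA hd hd1 ha1 hb ha hμa1 hblock1 hblock2 j hj
  have hbp := b_pos ha1 hb ha j hj
  have haposj := a_pos ha1 hb ha j hj
  rcases hcase with ⟨i, hi, hlt, hle⟩ | ⟨i, hi, hlt, hle⟩
  · -- block 1
    rw [hblock1 j hj i hi (k + 1) hlt hle]
    by_cases hc : 2 ^ i * a j < k
    · rw [hblock1 j hj i hi k hc (by omega)]
    · have hke : k = 2 ^ i * a j := by omega
      rcases Nat.eq_zero_or_pos i with hi0 | hipos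
      · subst hi0
        have : k = a j := by simpa using hke
        rw [this, pow_one]
        nlinarith
      · have hlt' : 2 ^ (i - 1) * a j < k := by
          rw [hke]
          exact (Nat.mul_lt_mul_right haposj).mpr
            (Nat.pow_lt_pow_right (by norm_num) (by omega))
        have hle' : k ≤ 2 ^ (i - 1 + 1) * a j := by
          rw [Nat.sub_add_cancel hipos]; omega
        rw [hblock1 j hj (i - 1) (by omega) k hlt' hle', Nat.sub_add_cancel hipos]
        have : A ^ i ≤ A ^ (i + 1) := pow_le_pow_right₀ hA1 (by omega)
        nlinarith [pow_pos hApos i]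
  · -- block 2
    have hstep := hblock2 j hj i hi (k + 1) hlt hle
    rw [Nat.add_sub_cancel] at hstep
    rw [hstep]
    have hkpos : 0 < μ k := mu_pos hA hd hd1 ha1 hb ha hμa1 hblock1 hblock2 k hk
    have hfac : (1:ℝ) ≤ (2 : ℝ) ^ ((1 : ℝ) / (2 * 2 ^ i * (b j : ℝ))) := by
      rw [show (1:ℝ) = (2:ℝ) ^ (0:ℝ) from (Real.rpow_zero 2).symm]
      apply Real.rpow_le_rpow_of_exponent_le (by norm_num)
      positivity
    nlinarith

lemma mu_mono (hA : 2 < A) (hd : StrictMonoOn d (Set.Ici 1)) (hd1 : 1 ≤ d 1)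
    (ha1 : a 1 = 1) (hb : ∀ j ≥ 1, b j = 2 ^ (d j) * a j)
    (ha : ∀ j ≥ 1, a (j + 1) = 2 ^ j * b j) (hμa1 : μ (a 1) = 2)
    (hblock1 : ∀ j ≥ 1, ∀ i < d j, ∀ k, 2 ^ i * a j < k → k ≤ 2 ^ (i + 1) * a j →
      μ k = A ^ (i + 1) * μ (a j))
    (hblock2 : ∀ j ≥ 1, ∀ i < j, ∀ k, 2 ^ i * b j < k → k ≤ 2 ^ (i + 1) * b j →
      μ k = (2 : ℝ) ^ ((1 : ℝ) / (2 * 2 ^ i * (b j : ℝ))) * μ (k - 1)) :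
    ∀ m k, 1 ≤ m → m ≤ k → μ m ≤ μ k := by
  intro m k hm hmk
  induction k, hmk using Nat.le_induction with
  | base => exact le_refl _
  | succ k hk ih =>
    exact le_trans ih (mu_step hA hd hd1 ha1 hb ha hμa1 hblock1 hblock2 k (by omega))
lemma b_ge_idx (ha1 : a 1 = 1) (hb : ∀ j ≥ 1, b j = 2 ^ (d j) * a j)
    (ha : ∀ j ≥ 1, a (j + 1) = 2 ^ j * b j) : ∀ j, 1 ≤ j → j ≤ b j := by
  intro j hj
  have h1 := a_ge_idx ha1 hb ha j hj
  have h2 : a j ≤ b j := by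
    rw [hb j hj]
    exact Nat.le_mul_of_pos_left _ (by positivity)
  omega

lemma ratio4 (hA : 2 < A) (hd : StrictMonoOn d (Set.Ici 1)) (hd1 : 1 ≤ d 1)
    (ha1 : a 1 = 1) (hb : ∀ j ≥ 1, b j = 2 ^ (d j) * a j)
    (ha : ∀ j ≥ 1, a (j + 1) = 2 ^ j * b j) (hμa1 : μ (a 1) = 2)
    (hblock1 : ∀ j ≥ 1, ∀ i < d j, ∀ k, 2 ^ i * a j < k → k ≤ 2 ^ (i + 1) * a j →
      μ k = A ^ (i + 1) * μ (a j))
    (hblock2 : ∀ j ≥ 1, ∀ i < j, ∀ k, 2 ^ i * b j < k → k ≤ 2 ^ (i + 1) * b j →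
      μ k = (2 : ℝ) ^ ((1 : ℝ) / (2 * 2 ^ i * (b j : ℝ))) * μ (k - 1)) :
    ∀ k, 1 ≤ k → (2:ℝ) ^ ((1:ℝ)/4) * μ k ≤ μ (4 * k) := by
  have hApos : (0:ℝ) < A := by linarith
  have hA1 : (1:ℝ) ≤ A := by linarith
  set c : ℝ := (2:ℝ) ^ ((1:ℝ)/4) with hc
  have hcpos : 0 < c := Real.rpow_pos_of_pos (by norm_num) _
  have hc12 : c ≤ (2:ℝ) ^ ((1:ℝ)/2) :=
    Real.rpow_le_rpow_of_exponent_le (by norm_num) (by norm_num)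
  have hc2 : c ≤ 2 := by
    have : c ≤ (2:ℝ) ^ (1:ℝ) :=
      Real.rpow_le_rpow_of_exponent_le (by norm_num) (by norm_num)
    rwa [Real.rpow_one] at this
  intro k hk
  rcases Nat.lt_or_ge k 2 with h2 | h2
  · -- k = 1
    have hk1 : k = 1 := by omega
    subst hk1
    have hm1 : μ 1 = 2 := by have := hμa1; rwa [ha1] at this
    have hm2 : μ 2 = A * μ 1 := by
      have := hblock1 1 (le_refl _) 0 (by omega) 2 (by rw [ha1]; norm_num)
        (by rw [ha1]; norm_num)
      simpa [ha1] using this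
    have hmono : μ 2 ≤ μ 4 :=
      mu_mono hA hd hd1 ha1 hb ha hμa1 hblock1 hblock2 2 4 (by norm_num) (by norm_num)
    have : μ (4 * 1) = μ 4 := by norm_num
    rw [this, hm1]
    nlinarith
  obtain ⟨j, hj, hcase⟩ := classify ha1 hb ha k h2
  have hap := mu_a_pos hA hd hd1 ha1 hb ha hμa1 hblock1 hblock2 j hj
  have hbp := b_pos ha1 hb ha j hj
  have haposj := a_pos ha1 hb ha j hj
  have hμk : 0 < μ k := mu_pos hA hd hd1 ha1 hb ha hμa1 hblock1 hblock2 k hk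
  rcases hcase with ⟨i, hi, hlt, hle⟩ | ⟨i, hij, hlt, hle⟩
  · -- k in block 1 of stage j
    have hkval : μ k = A ^ (i + 1) * μ (a j) := hblock1 j hj i hi k hlt hle
    have e1 : 2 ^ (i + 2) * a j = 4 * (2 ^ i * a j) := by ring
    have e2 : 2 ^ (i + 2 + 1) * a j = 4 * (2 ^ (i + 1) * a j) := by ring
    by_cases h3 : i + 3 ≤ d j
    · have h4 : μ (4 * k) = A ^ (i + 2 + 1) * μ (a j) :=
        hblock1 j hj (i + 2) (by omega) (4 * k) (by omega) (by omega)
      have hcA2 : c ≤ A ^ 2 := by nlinarith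
      rw [hkval, h4]
      calc c * (A ^ (i + 1) * μ (a j)) ≤ A ^ 2 * (A ^ (i + 1) * μ (a j)) := by
            apply mul_le_mul_of_nonneg_right hcA2
            positivity
      _ = A ^ (i + 2 + 1) * μ (a j) := by ring
    · have hdj2 : d j = i + 1 ∨ d j = i + 2 := by omega
      rcases hdj2 with hdj | hdj
      · -- d j = i + 1 : 2 * b j ≤ 4 k
        have hbeq : 2 * b j = 4 * (2 ^ i * a j) := by
          rw [hb j hj, hdj]; ring
        have h2b : 2 * b j ≤ 4 * k := by omega
        have hmono : μ (2 * b j) ≤ μ (4 * k) :=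
          mu_mono hA hd hd1 ha1 hb ha hμa1 hblock1 hblock2 (2 * b j) (4 * k)
            (by omega) h2b
        have hv2b : μ (2 * b j) = (2:ℝ) ^ ((1:ℝ)/2) * μ (b j) := by
          have := mu_pow2b ha1 hb ha hblock2 j hj 1 hj
          simpa using this
        have hvb : μ (b j) = A ^ (i + 1) * μ (a j) := by
          rw [mu_b hA hd hd1 ha1 hb ha hblock1 j hj, hdj]
        rw [hkval]
        calc c * (A ^ (i + 1) * μ (a j)) ≤ (2:ℝ) ^ ((1:ℝ)/2) * (A ^ (i + 1) * μ (a j)) := by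
              apply mul_le_mul_of_nonneg_right hc12
              positivity
        _ = μ (2 * b j) := by rw [hv2b, hvb]
        _ ≤ μ (4 * k) := hmono
      · -- d j = i + 2 : b j ≤ 4 k
        have hbeq : b j = 4 * (2 ^ i * a j) := by
          rw [hb j hj, hdj]; ring
        have hbk : b j ≤ 4 * k := by omega
        have hmono : μ (b j) ≤ μ (4 * k) :=
          mu_mono hA hd hd1 ha1 hb ha hμa1 hblock1 hblock2 (b j) (4 * k) (by omega) hbk
        have hvb : μ (b j) = A ^ (i + 2) * μ (a j) := by
          rw [mu_b hA hd hd1 ha1 hb ha hblock1 j hj, hdj]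
        rw [hkval]
        calc c * (A ^ (i + 1) * μ (a j)) ≤ A * (A ^ (i + 1) * μ (a j)) := by
              apply mul_le_mul_of_nonneg_right (by linarith)
              positivity
        _ = A ^ (i + 2) * μ (a j) := by ring
        _ ≤ μ (4 * k) := hvb ▸ hmono
  · -- k in block 2 of stage j
    have hμb : 0 < μ (b j) :=
      mu_pos hA hd hd1 ha1 hb ha hμa1 hblock1 hblock2 (b j) (by omega)
    have hkval : μ k = (2:ℝ) ^ (((k : ℝ) - 2 ^ i * (b j : ℝ)) /
        (2 * 2 ^ i * (b j : ℝ)) + (i : ℝ) / 2) * μ (b j) :=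
      mu_val2 ha1 hb ha hblock2 j hj i hij k (le_of_lt hlt) hle
    have e1 : 2 ^ (i + 2) * b j = 4 * (2 ^ i * b j) := by ring
    have e2 : 2 ^ (i + 2 + 1) * b j = 4 * (2 ^ (i + 1) * b j) := by ring
    by_cases h3 : i + 3 ≤ j
    · -- interior: ratio exactly 2
      have h4 : μ (4 * k) = (2:ℝ) ^ ((((4 * k : ℕ) : ℝ) - 2 ^ (i + 2) * (b j : ℝ)) /
          (2 * 2 ^ (i + 2) * (b j : ℝ)) + ((i + 2 : ℕ) : ℝ) / 2) * μ (b j) :=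
        mu_val2 ha1 hb ha hblock2 j hj (i + 2) (by omega) (4 * k) (by omega) (by omega)
      have hBr : (0:ℝ) < (b j : ℝ) := by exact_mod_cast hbp
      have hexp : (((4 * k : ℕ) : ℝ) - 2 ^ (i + 2) * (b j : ℝ)) /
          (2 * 2 ^ (i + 2) * (b j : ℝ)) + ((i + 2 : ℕ) : ℝ) / 2 =
          (((k : ℝ) - 2 ^ i * (b j : ℝ)) / (2 * 2 ^ i * (b j : ℝ)) + (i : ℝ) / 2) + 1 := by
        push_cast
        field_simp
        ring
      rw [h4, hexp, Real.rpow_add (by norm_num : (0:ℝ) < 2), Real.rpow_one, hkval]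
      have hX : (0:ℝ) < (2:ℝ) ^ (((k : ℝ) - 2 ^ i * (b j : ℝ)) /
          (2 * 2 ^ i * (b j : ℝ)) + (i : ℝ) / 2) * μ (b j) := by
        have := Real.rpow_pos_of_pos (show (0:ℝ) < 2 by norm_num)
          (((k : ℝ) - 2 ^ i * (b j : ℝ)) / (2 * 2 ^ i * (b j : ℝ)) + (i : ℝ) / 2)
        positivity
      nlinarith
    · -- near the end of the stage: 4k lands in block 1 of stage j+1
      have hka : k ≤ a (j + 1) := by
        have : 2 ^ (i + 1) * b j ≤ 2 ^ j * b j :=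
          Nat.mul_le_mul_right _ (Nat.pow_le_pow_right (by norm_num) (by omega))
        rw [ha j hj]
        omega
      have haj1 : a (j + 1) < 4 * k := by
        have h1 : 2 ^ j * b j ≤ 2 ^ (i + 2) * b j :=
          Nat.mul_le_mul_right _ (Nat.pow_le_pow_right (by norm_num) (by omega))
        rw [ha j hj]
        omega
      have hd2 : 2 ≤ d (j + 1) := le_trans (by omega) (d_ge hd hd1 (j + 1) (by omega))
      have h4b : 4 * k ≤ 2 ^ (d (j + 1)) * a (j + 1) := by
        have h1 : 4 * k ≤ 4 * a (j + 1) := by omega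
        have h2 : 4 * a (j + 1) ≤ 2 ^ (d (j + 1)) * a (j + 1) := by
          apply Nat.mul_le_mul_right
          calc 4 = 2 ^ 2 := by norm_num
          _ ≤ 2 ^ (d (j + 1)) := Nat.pow_le_pow_right (by norm_num) hd2
        omega
      obtain ⟨i', hi', hlt', hle'⟩ := dyadic (d (j + 1)) haj1 h4b
      have h4val : μ (4 * k) = A ^ (i' + 1) * μ (a (j + 1)) :=
        hblock1 (j + 1) (by omega) i' hi' (4 * k) hlt' hle'
      have hμaj1 : 0 < μ (a (j + 1)) :=
        mu_a_pos hA hd hd1 ha1 hb ha hμa1 hblock1 hblock2 (j + 1) (by omega)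
      have hmono : μ k ≤ μ (a (j + 1)) :=
        mu_mono hA hd hd1 ha1 hb ha hμa1 hblock1 hblock2 k (a (j + 1)) hk hka
      have hpow : A ≤ A ^ (i' + 1) := by
        calc A = A ^ 1 := (pow_one A).symm
        _ ≤ A ^ (i' + 1) := pow_le_pow_right₀ hA1 (by omega)
      rw [h4val]
      calc c * μ k ≤ A * μ k := mul_le_mul_of_nonneg_right (by linarith) hμk.le
      _ ≤ A * μ (a (j + 1)) := mul_le_mul_of_nonneg_left hmono hApos.le
      _ ≤ A ^ (i' + 1) * μ (a (j + 1)) := mul_le_mul_of_nonneg_right hpow hμaj1.le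

lemma ratio4_at_b (ha1 : a 1 = 1) (hb : ∀ j ≥ 1, b j = 2 ^ (d j) * a j)
    (ha : ∀ j ≥ 1, a (j + 1) = 2 ^ j * b j)
    (hblock2 : ∀ j ≥ 1, ∀ i < j, ∀ k, 2 ^ i * b j < k → k ≤ 2 ^ (i + 1) * b j →
      μ k = (2 : ℝ) ^ ((1 : ℝ) / (2 * 2 ^ i * (b j : ℝ))) * μ (k - 1)) :
    ∀ j, 2 ≤ j → μ (4 * b j) = 2 * μ (b j) := by
  intro j hj
  have hbp := b_pos ha1 hb ha j (by omega)
  have hBr : (0:ℝ) < (b j : ℝ) := by exact_mod_cast hbp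
  have h := mu_val2 ha1 hb ha hblock2 j (by omega) 1 (by omega) (4 * b j)
    (by omega) (by omega)
  rw [h]
  have hexp : (((4 * b j : ℕ) : ℝ) - 2 ^ 1 * (b j : ℝ)) / (2 * 2 ^ 1 * (b j : ℝ)) +
      ((1 : ℕ) : ℝ) / 2 = 1 := by
    push_cast
    field_simp
    ring
  rw [hexp, Real.rpow_one]

lemma mu_ell_b (ha1 : a 1 = 1) (hb : ∀ j ≥ 1, b j = 2 ^ (d j) * a j)
    (ha : ∀ j ≥ 1, a (j + 1) = 2 ^ j * b j)
    (hblock2 : ∀ j ≥ 1, ∀ i < j, ∀ k, 2 ^ i * b j < k → k ≤ 2 ^ (i + 1) * b j →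
      μ k = (2 : ℝ) ^ ((1 : ℝ) / (2 * 2 ^ i * (b j : ℝ))) * μ (k - 1)) :
    ∀ ℓ n j, 2 ^ n < ℓ → ℓ ≤ 2 ^ (n + 1) → 1 ≤ j → n < j →
      μ (ℓ * b j) = (2:ℝ) ^ (((ℓ:ℝ) - 2 ^ n) / (2 * 2 ^ n) + (n:ℝ) / 2) * μ (b j) := by
  intro ℓ n j h1 h2 hj hnj
  have hbp := b_pos ha1 hb ha j hj
  have hBr : (0:ℝ) < (b j : ℝ) := by exact_mod_cast hbp
  have h := mu_val2 ha1 hb ha hblock2 j hj n hnj (ℓ * b j)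
    (Nat.mul_le_mul_right _ (le_of_lt h1)) (Nat.mul_le_mul_right _ h2)
  rw [h]
  congr 1
  congr 1
  push_cast
  field_simp

set_option maxHeartbeats 1000000 in
lemma E_le (ℓ n : ℕ) (h1 : 2 ^ n < ℓ) (h2 : ℓ ≤ 2 ^ (n + 1)) :
    (2:ℝ) ^ (((ℓ:ℝ) - 2 ^ n) / (2 * 2 ^ n) + (n:ℝ) / 2) ≤
      (ℓ:ℝ) ^ (1/2 + 1/2 * (Real.log 2 / Real.log 3)) := by
  have hl2 : (0:ℝ) < Real.log 2 := Real.log_pos (by norm_num)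
  have hl3 : (0:ℝ) < Real.log 3 := Real.log_pos (by norm_num)
  have h23 : Real.log 2 ≤ Real.log 3 := Real.log_le_log (by norm_num) (by norm_num)
  have h32 : Real.log 3 ≤ 2 * Real.log 2 := by
    have h4 : Real.log 3 ≤ Real.log 4 := Real.log_le_log (by norm_num) (by norm_num)
    have h4' : Real.log 4 = 2 * Real.log 2 := by
      rw [show (4:ℝ) = 2 ^ (2:ℕ) by norm_num, Real.log_pow]
      push_cast; ring
    linarith
  set β : ℝ := 1/2 + 1/2 * (Real.log 2 / Real.log 3) with hβ
  have hβhalf : 1/2 ≤ β := by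
    have : 0 < Real.log 2 / Real.log 3 := by positivity
    rw [hβ]; linarith
  have hβ34 : 3/4 ≤ β := by
    have : (1:ℝ)/2 ≤ Real.log 2 / Real.log 3 := by
      rw [le_div_iff₀ hl3]; linarith
    rw [hβ]; linarith
  have hP : (0:ℝ) < 2 ^ n := by positivity
  have hℓ2 : (2:ℝ) ≤ (ℓ:ℝ) := by
    have : 2 ≤ ℓ := by
      have := Nat.one_le_two_pow (n := n)
      omega
    exact_mod_cast this
  have hℓpos : (0:ℝ) < (ℓ:ℝ) := by linarith
  have hlogl2 : Real.log 2 ≤ Real.log (ℓ:ℝ) := Real.log_le_log (by norm_num) hℓ2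
  have hloglpos : 0 < Real.log (ℓ:ℝ) := by linarith
  have hnl : (n:ℝ) * Real.log 2 < Real.log (ℓ:ℝ) := by
    have hcast : ((2:ℝ)) ^ n < (ℓ:ℝ) := by exact_mod_cast h1
    calc (n:ℝ) * Real.log 2 = Real.log ((2:ℝ) ^ n) := by rw [Real.log_pow]
    _ < Real.log (ℓ:ℝ) := Real.log_lt_log hP hcast
  have hℓle : (ℓ:ℝ) ≤ 2 * 2 ^ n := by
    have : (ℓ:ℝ) ≤ ((2:ℝ)) ^ (n + 1) := by exact_mod_cast h2
    rw [pow_succ] at this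
    linarith
  have hE : ((ℓ:ℝ) - 2 ^ n) / (2 * 2 ^ n) + (n:ℝ) / 2 ≤ ((n:ℝ) + 1) / 2 := by
    have : ((ℓ:ℝ) - 2 ^ n) / (2 * 2 ^ n) ≤ 1 / 2 := by
      rw [div_le_iff₀ (by positivity)]
      linarith
    linarith
  rw [Real.rpow_def_of_pos (by norm_num : (0:ℝ) < 2),
    Real.rpow_def_of_pos hℓpos]
  apply Real.exp_le_exp.mpr
  have key : Real.log 2 * (((n:ℝ) + 1) / 2) ≤ Real.log (ℓ:ℝ) * β := by
    rcases Nat.lt_or_ge n 2 with hn | hn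
    · interval_cases n
      · -- n = 0
        simp only [Nat.cast_zero]
        nlinarith
      · -- n = 1, ℓ ≥ 3
        have hℓ3 : (3:ℝ) ≤ (ℓ:ℝ) := by
          have : 3 ≤ ℓ := by norm_num at h1; omega
          exact_mod_cast this
        have hlogl3 : Real.log 3 ≤ Real.log (ℓ:ℝ) := Real.log_le_log (by norm_num) hℓ3
        have hq : Real.log 2 / Real.log 3 * Real.log 3 = Real.log 2 :=
          div_mul_cancel₀ _ (ne_of_gt hl3)
        simp only [Nat.cast_one]
        have hβlog3 : Real.log 2 ≤ Real.log 3 * β := by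
          rw [hβ]; nlinarith
        calc Real.log 2 * (((1:ℝ) + 1) / 2) = Real.log 2 := by ring
        _ ≤ Real.log 3 * β := hβlog3
        _ ≤ Real.log (ℓ:ℝ) * β := by nlinarith
    · -- n ≥ 2
      have hn' : (2:ℝ) ≤ (n:ℝ) := by exact_mod_cast hn
      have step1 : Real.log 2 * (((n:ℝ) + 1) / 2) ≤ 3/4 * ((n:ℝ) * Real.log 2) := by
        nlinarith
      have step2 : 3/4 * ((n:ℝ) * Real.log 2) ≤ 3/4 * Real.log (ℓ:ℝ) := by nlinarith
      have step3 : 3/4 * Real.log (ℓ:ℝ) ≤ Real.log (ℓ:ℝ) * β := by nlinarith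
      linarith
  calc Real.log 2 * (((ℓ:ℝ) - 2 ^ n) / (2 * 2 ^ n) + (n:ℝ) / 2)
      ≤ Real.log 2 * (((n:ℝ) + 1) / 2) := mul_le_mul_of_nonneg_left hE hl2.le
  _ ≤ Real.log (ℓ:ℝ) * β := key

end
end MuAux


open MuAux in
theorem mu_index_estimates
(A : ℝ) (hA : 2 < A)
    (a b d : ℕ → ℕ) (μ : ℕ → ℝ)
    (hd : StrictMonoOn d (Set.Ici 1)) (hd1 : 1 ≤ d 1)
    (hdgrow : ∀ j ≥ 1, (2 / A) ^ (d j) ≤ 1 / (2 : ℝ) ^ ((j : ℝ) / 2 + 1))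
    (ha1 : a 1 = 1)
    (hb : ∀ j ≥ 1, b j = 2 ^ (d j) * a j)
    (ha : ∀ j ≥ 1, a (j + 1) = 2 ^ j * b j)
    (hμa1 : μ (a 1) = 2)
    (hblock1 : ∀ j ≥ 1, ∀ i < d j, ∀ k, 2 ^ i * a j < k → k ≤ 2 ^ (i + 1) * a j →
      μ k = A ^ (i + 1) * μ (a j))
    (hblock2 : ∀ j ≥ 1, ∀ i < j, ∀ k, 2 ^ i * b j < k → k ≤ 2 ^ (i + 1) * b j →
      μ k = (2 : ℝ) ^ ((1 : ℝ) / (2 * 2 ^ i * (b j : ℝ))) * μ (k - 1)) :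
    ((2 : ℝ) ^ ((1 : ℝ) / 4) ≤ liminf (fun k : ℕ => μ (4 * k) / μ k) atTop ∧
      1 < (2 : ℝ) ^ ((1 : ℝ) / 4)) ∧
    (∀ ℓ : ℕ, 2 ≤ ℓ →
      liminf (fun j : ℕ => μ (ℓ * j) / μ j) atTop ≤
        (ℓ : ℝ) ^ (1/2 + 1/2 * (Real.log 2 / Real.log 3))) ∧
    (1/2 + 1/2 * (Real.log 2 / Real.log 3) < 1) ∧
    seqGammaIdx μ ≤ ENNReal.ofReal (1/2 + 1/2 * (Real.log 2 / Real.log 3)) := by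
  have part2 : ∀ ℓ : ℕ, 2 ≤ ℓ →
      liminf (fun j : ℕ => μ (ℓ * j) / μ j) atTop ≤
        (ℓ : ℝ) ^ (1/2 + 1/2 * (Real.log 2 / Real.log 3)) := by
    intro ℓ hℓ
    set n := Nat.clog 2 ℓ - 1 with hn
    have hm : 1 ≤ Nat.clog 2 ℓ := Nat.clog_pos (by norm_num) hℓ
    have h1 : 2 ^ n < ℓ := by
      have := Nat.pow_pred_clog_lt_self (by norm_num : 1 < 2) (show 1 < ℓ by omega)
      simpa [hn] using this
    have h2 : ℓ ≤ 2 ^ (n + 1) := by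
      have := Nat.le_pow_clog (by norm_num : 1 < 2) ℓ
      rwa [show n + 1 = Nat.clog 2 ℓ by omega]
    apply Filter.liminf_le_of_frequently_le
    · rw [Filter.frequently_atTop]
      intro N
      set j := max N (n + 1) with hjdef
      have hj1 : 1 ≤ j := by omega
      have hjn : n < j := by omega
      have hjb := b_ge_idx ha1 hb ha j hj1
      refine ⟨b j, by omega, ?_⟩
      have hval := mu_ell_b ha1 hb ha hblock2 ℓ n j h1 h2 hj1 hjn
      have hμb : 0 < μ (b j) :=
        mu_pos hA hd hd1 ha1 hb ha hμa1 hblock1 hblock2 (b j)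
          (by have := b_pos ha1 hb ha j hj1; omega)
      show μ (ℓ * b j) / μ (b j) ≤ _
      rw [hval, mul_div_assoc, div_self (ne_of_gt hμb), mul_one]
      exact E_le ℓ n h1 h2
    · apply Filter.isBoundedUnder_of_eventually_ge (a := (0:ℝ))
      filter_upwards [Filter.eventually_ge_atTop 1] with k hk
      have hp1 := mu_pos hA hd hd1 ha1 hb ha hμa1 hblock1 hblock2 k hk
      have hp2 := mu_pos hA hd hd1 ha1 hb ha hμa1 hblock1 hblock2 (ℓ * k)
        (by have : 0 < ℓ * k := Nat.mul_pos (by omega) (by omega); omega)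
      positivity
  refine ⟨⟨?_, ?_⟩, part2, ?_, ?_⟩
  · apply Filter.le_liminf_of_le
    · apply Filter.IsCoboundedUnder.of_frequently_le (a := (2:ℝ))
      rw [Filter.frequently_atTop]
      intro N
      set j := max N 2 with hjdef
      have hj2 : 2 ≤ j := by omega
      have hjb := b_ge_idx ha1 hb ha j (by omega)
      refine ⟨b j, by omega, ?_⟩
      have hμb : 0 < μ (b j) :=
        mu_pos hA hd hd1 ha1 hb ha hμa1 hblock1 hblock2 (b j)
          (by have := b_pos ha1 hb ha j (by omega); omega)
      show μ (4 * b j) / μ (b j) ≤ 2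
      rw [ratio4_at_b ha1 hb ha hblock2 j hj2, mul_div_assoc,
        div_self (ne_of_gt hμb), mul_one]
    · filter_upwards [Filter.eventually_ge_atTop 1] with k hk
      have hr := ratio4 hA hd hd1 ha1 hb ha hμa1 hblock1 hblock2 k hk
      have hμk := mu_pos hA hd hd1 ha1 hb ha hμa1 hblock1 hblock2 k hk
      rw [le_div_iff₀ hμk]
      exact hr
  · rw [show (1:ℝ) = (2:ℝ) ^ (0:ℝ) from (Real.rpow_zero 2).symm]
    exact Real.rpow_lt_rpow_of_exponent_lt (by norm_num) (by norm_num)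
  · have hl3 : (0:ℝ) < Real.log 3 := Real.log_pos (by norm_num)
    have h23 : Real.log 2 < Real.log 3 := Real.log_lt_log (by norm_num) (by norm_num)
    have : Real.log 2 / Real.log 3 < 1 := (div_lt_one hl3).mpr h23
    linarith
  · rw [seqGammaIdx]
    apply iSup₂_le
    intro γ hγ
    simp only [Set.mem_setOf_eq] at hγ
    obtain ⟨hγpos, ℓ, hℓ, hlt⟩ := hγ
    have h2 := part2 ℓ hℓ
    have hℓγβ : (ℓ:ℝ) ^ γ < (ℓ:ℝ) ^ (1/2 + 1/2 * (Real.log 2 / Real.log 3)) :=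
      lt_of_lt_of_le hlt h2
    have hl1 : (1:ℝ) < (ℓ:ℝ) := by exact_mod_cast (by omega : 1 < ℓ)
    exact ENNReal.ofReal_le_ofReal ((Real.rpow_lt_rpow_left_iff hl1).mp hℓγβ).le
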